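/- Let A and X be perfect weak Hopf algebras over a field k with weak antipodes S_A and S_X respectively, suppose S_A is invertible, and suppose (X, A) is a weak Hopf skew-pair. Then A and X are both biperfect; that is, A and X are both coperfect (in addition to being perfect). -/

import Mathlib

noncomputable section

open TensorProduct

/-- The data of a (weak) bialgebra on a `k`-vector space `H`:
multiplication, unit, comultiplication and counit, all as linear maps. -/
structure BialgData (k : Type) [Field k] (H : Type) [AddCommGroup H] [Module k H] where
  mul : H ⊗[k] H →ₗ[k] H
  one : H
  comul : H →ₗ[k] H ⊗[k] H
  counit : H →ₗ[k] k

namespace BialgData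

variable {k : Type} [Field k] {H : Type} [AddCommGroup H] [Module k H]

/-- The axioms making `BialgData` an honest bialgebra. -/
structure IsBialgebra (B : BialgData k H) : Prop where
  mul_assoc : ∀ x y z : H, B.mul (B.mul (x ⊗ₜ y) ⊗ₜ z) = B.mul (x ⊗ₜ B.mul (y ⊗ₜ z))
  one_mul : ∀ x : H, B.mul (B.one ⊗ₜ x) = x
  mul_one : ∀ x : H, B.mul (x ⊗ₜ B.one) = x
  coassoc : ∀ x : H,
    (TensorProduct.assoc k H H H) ((TensorProduct.map B.comul LinearMap.id) (B.comul x))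
      = (TensorProduct.map LinearMap.id B.comul) (B.comul x)
  counit_comul : ∀ x : H,
    (TensorProduct.lid k H) ((TensorProduct.map B.counit LinearMap.id) (B.comul x)) = x
  comul_counit : ∀ x : H,
    (TensorProduct.rid k H) ((TensorProduct.map LinearMap.id B.counit) (B.comul x)) = x
  comul_mul : ∀ x y : H,
    B.comul (B.mul (x ⊗ₜ y)) =
      (TensorProduct.map B.mul B.mul)
        ((TensorProduct.tensorTensorTensorComm k H H H H) (B.comul x ⊗ₜ B.comul y))
  comul_one : B.comul B.one = B.one ⊗ₜ B.one
  counit_mul : ∀ x y : H, B.counit (B.mul (x ⊗ₜ y)) = B.counit x * B.counit y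
  counit_one : B.counit B.one = 1

/-- Convolution product of linear endomorphisms: `f ∗ g = mul ∘ (f ⊗ g) ∘ comul`. -/
def conv (B : BialgData k H) (f g : H →ₗ[k] H) : H →ₗ[k] H :=
  B.mul ∘ₗ TensorProduct.map f g ∘ₗ B.comul

/-- `T` is a weak antipode: `id ∗ T ∗ id = id` and `T ∗ id ∗ T = T`. -/
def IsWeakAntipode (B : BialgData k H) (T : H →ₗ[k] H) : Prop :=
  B.conv (B.conv LinearMap.id T) LinearMap.id = LinearMap.id ∧
    B.conv (B.conv T LinearMap.id) T = T

/-- `T` is an anti-bialgebra morphism: `T(xy) = T(y)T(x)`, `T(1) = 1`,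
`Δ(T x) = Σ T(x'') ⊗ T(x')` and `ε ∘ T = ε`. -/
def IsAntiBialgebraHom (B : BialgData k H) (T : H →ₗ[k] H) : Prop :=
  (∀ x y : H, T (B.mul (x ⊗ₜ y)) = B.mul (T y ⊗ₜ T x)) ∧
  T B.one = B.one ∧
  (∀ x : H, B.comul (T x) =
    (TensorProduct.comm k H H) ((TensorProduct.map T T) (B.comul x))) ∧
  ∀ x : H, B.counit (T x) = B.counit x

/-- `H` is perfect: `T` is an anti-bialgebra morphism and `(id ∗ T)(H) ⊆ C(H)`,
i.e. `Σ x'T(x'')` is central for every `x`. -/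
def Perfect (B : BialgData k H) (T : H →ₗ[k] H) : Prop :=
  B.IsAntiBialgebraHom T ∧
    ∀ x y : H,
      B.mul ((B.conv LinearMap.id T) x ⊗ₜ y) = B.mul (y ⊗ₜ (B.conv LinearMap.id T) x)

/-- `H` is coperfect: `T` is an anti-bialgebra morphism and
`Σ x'T(x'') ⊗ x''' = Σ x''T(x''') ⊗ x'` for every `x`. -/
def Coperfect (B : BialgData k H) (T : H →ₗ[k] H) : Prop :=
  B.IsAntiBialgebraHom T ∧
    ∀ x : H,
      (TensorProduct.map (B.conv LinearMap.id T) LinearMap.id) (B.comul x)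
        = (TensorProduct.comm k H H)
            ((TensorProduct.map LinearMap.id (B.conv LinearMap.id T)) (B.comul x))

/-- `H` is biperfect: perfect and coperfect. -/
def Biperfect (B : BialgData k H) (T : H →ₗ[k] H) : Prop :=
  B.Perfect T ∧ B.Coperfect T

/-- The opposite bialgebra `H^op`: same coalgebra, opposite multiplication. -/
def op (B : BialgData k H) : BialgData k H :=
  { B with mul := B.mul ∘ₗ (TensorProduct.comm k H H).toLinearMap }

/-- The co-opposite bialgebra `H^cop`: same algebra, opposite comultiplication. -/
def cop (B : BialgData k H) : BialgData k H :=
  { B with comul := (TensorProduct.comm k H H).toLinearMap ∘ₗ B.comul }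

/-- `H` is commutative. -/
def Commutative (B : BialgData k H) : Prop :=
  ∀ x y : H, B.mul (x ⊗ₜ y) = B.mul (y ⊗ₜ x)

/-- `H` is cocommutative. -/
def Cocommutative (B : BialgData k H) : Prop :=
  ∀ x : H, (TensorProduct.comm k H H) (B.comul x) = B.comul x

/-- The dual weak Hopf algebra structure on `H* = Module.Dual k H` (for `H` finite
dimensional): convolution multiplication `(fg)(x) = Σ f(x')g(x'')`, unit `ε`,
comultiplication dual to the multiplication of `H`, counit `f ↦ f 1`. -/
def dual (B : BialgData k H) [FiniteDimensional k H] :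
    BialgData k (Module.Dual k H) where
  mul := B.comul.dualMap ∘ₗ TensorProduct.dualDistrib k H H
  one := B.counit
  comul := ((TensorProduct.dualDistribEquiv k H H).symm :
      Module.Dual k (H ⊗[k] H) →ₗ[k] Module.Dual k H ⊗[k] Module.Dual k H) ∘ₗ
    B.mul.dualMap
  counit := Module.Dual.eval k H B.one

section Reshuffle

variable (k)
variable (M N P : Type) [AddCommGroup M] [AddCommGroup N] [AddCommGroup P]
  [Module k M] [Module k N] [Module k P]

/-- `(u ⊗ v) ⊗ w ↦ (u ⊗ w) ⊗ v`. -/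
def swap23 : (M ⊗[k] N) ⊗[k] P →ₗ[k] (M ⊗[k] P) ⊗[k] N :=
  ((TensorProduct.assoc k M P N).symm : M ⊗[k] (P ⊗[k] N) →ₗ[k] (M ⊗[k] P) ⊗[k] N) ∘ₗ
    (TensorProduct.map LinearMap.id ((TensorProduct.comm k N P) : N ⊗[k] P →ₗ[k] P ⊗[k] N)) ∘ₗ
      ((TensorProduct.assoc k M N P) : (M ⊗[k] N) ⊗[k] P →ₗ[k] M ⊗[k] (N ⊗[k] P))

/-- `(u ⊗ v) ⊗ w ↦ (w ⊗ u) ⊗ v`. -/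
def rot3 : (M ⊗[k] N) ⊗[k] P →ₗ[k] (P ⊗[k] M) ⊗[k] N :=
  ((TensorProduct.assoc k P M N).symm : P ⊗[k] (M ⊗[k] N) →ₗ[k] (P ⊗[k] M) ⊗[k] N) ∘ₗ
    ((TensorProduct.comm k (M ⊗[k] N) P) : (M ⊗[k] N) ⊗[k] P →ₗ[k] P ⊗[k] (M ⊗[k] N))

end Reshuffle

/-- The iterated comultiplication `x ↦ (x' ⊗ x'') ⊗ x'''`. -/
def comul2 (B : BialgData k H) : H →ₗ[k] (H ⊗[k] H) ⊗[k] H :=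
  (TensorProduct.map B.comul LinearMap.id) ∘ₗ B.comul

/-- The convolution multiplication on `H*`: `(fg)(x) = Σ f(x') g(x'')`. -/
def dualMul (B : BialgData k H) :
    Module.Dual k H ⊗[k] Module.Dual k H →ₗ[k] Module.Dual k H :=
  B.comul.dualMap ∘ₗ TensorProduct.dualDistrib k H H

/-- The comultiplication on `H*` dual to the multiplication of `H`. -/
def dualComul (B : BialgData k H) [FiniteDimensional k H] :
    Module.Dual k H →ₗ[k] Module.Dual k H ⊗[k] Module.Dual k H :=
  ((TensorProduct.dualDistribEquiv k H H).symm :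
      Module.Dual k (H ⊗[k] H) →ₗ[k] Module.Dual k H ⊗[k] Module.Dual k H) ∘ₗ
    B.mul.dualMap

/-- `u ⊗ v ↦ (x ↦ T⁻¹(u) · x · v)`, where `Tinv = T⁻¹`. -/
def conjLin (B : BialgData k H) (Tinv : H →ₗ[k] H) : H ⊗[k] H →ₗ[k] (H →ₗ[k] H) :=
  TensorProduct.lift
    ((((LinearMap.llcomp k H H H) ∘ₗ (TensorProduct.curry B.mul).flip).compl₂
        ((TensorProduct.curry B.mul) ∘ₗ Tinv)).flip)

/-- `g ⊗ (u ⊗ v) ↦ g(T⁻¹(u) · ? · v)`. -/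
def dualConj (B : BialgData k H) (Tinv : H →ₗ[k] H) :
    Module.Dual k H ⊗[k] (H ⊗[k] H) →ₗ[k] Module.Dual k H :=
  (TensorProduct.lift (LinearMap.llcomp k H H k)) ∘ₗ
    (TensorProduct.map LinearMap.id (B.conjLin Tinv))

/-- `a ↦ (a''' ⊗ a') ⊗ a''`. -/
def comul2rot (B : BialgData k H) : H →ₗ[k] (H ⊗[k] H) ⊗[k] H :=
  (BialgData.rot3 k H H H) ∘ₗ B.comul2

/-- The multiplication of the quantum double `D(H) = H^{*cop} ∞ H`:
`(f ∞ a)(g ∞ b) = Σ f · g(T⁻¹(a''') ? a') ∞ a'' b`. -/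
def doubleMul (B : BialgData k H) (Tinv : H →ₗ[k] H) :
    (Module.Dual k H ⊗[k] H) ⊗[k] (Module.Dual k H ⊗[k] H) →ₗ[k]
      Module.Dual k H ⊗[k] H :=
  (TensorProduct.map (B.dualMul) B.mul) ∘ₗ
  (TensorProduct.map ((TensorProduct.comm k (Module.Dual k H) (Module.Dual k H)) :
      Module.Dual k H ⊗[k] Module.Dual k H →ₗ[k] Module.Dual k H ⊗[k] Module.Dual k H)
    (LinearMap.id : H ⊗[k] H →ₗ[k] H ⊗[k] H)) ∘ₗ
  ((TensorProduct.tensorTensorTensorComm k (Module.Dual k H) H (Module.Dual k H) H) :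
    (Module.Dual k H ⊗[k] H) ⊗[k] (Module.Dual k H ⊗[k] H) →ₗ[k]
      (Module.Dual k H ⊗[k] Module.Dual k H) ⊗[k] (H ⊗[k] H)) ∘ₗ
  (TensorProduct.map
    ((TensorProduct.map (B.dualConj Tinv) LinearMap.id) ∘ₗ
      ((TensorProduct.assoc k (Module.Dual k H) (H ⊗[k] H) H).symm :
        Module.Dual k H ⊗[k] ((H ⊗[k] H) ⊗[k] H) →ₗ[k]
          (Module.Dual k H ⊗[k] (H ⊗[k] H)) ⊗[k] H))
    (LinearMap.id : Module.Dual k H ⊗[k] H →ₗ[k] Module.Dual k H ⊗[k] H)) ∘ₗ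
  ((TensorProduct.tensorTensorTensorComm k (Module.Dual k H) (Module.Dual k H)
      ((H ⊗[k] H) ⊗[k] H) H) :
    (Module.Dual k H ⊗[k] Module.Dual k H) ⊗[k] (((H ⊗[k] H) ⊗[k] H) ⊗[k] H) →ₗ[k]
      (Module.Dual k H ⊗[k] ((H ⊗[k] H) ⊗[k] H)) ⊗[k] (Module.Dual k H ⊗[k] H)) ∘ₗ
  (TensorProduct.map (LinearMap.id : Module.Dual k H ⊗[k] Module.Dual k H →ₗ[k]
      Module.Dual k H ⊗[k] Module.Dual k H)
    (TensorProduct.map B.comul2rot (LinearMap.id : H →ₗ[k] H))) ∘ₗ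
  (TensorProduct.map ((TensorProduct.comm k (Module.Dual k H) (Module.Dual k H)) :
      Module.Dual k H ⊗[k] Module.Dual k H →ₗ[k] Module.Dual k H ⊗[k] Module.Dual k H)
    (LinearMap.id : H ⊗[k] H →ₗ[k] H ⊗[k] H)) ∘ₗ
  ((TensorProduct.tensorTensorTensorComm k (Module.Dual k H) H (Module.Dual k H) H) :
    (Module.Dual k H ⊗[k] H) ⊗[k] (Module.Dual k H ⊗[k] H) →ₗ[k]
      (Module.Dual k H ⊗[k] Module.Dual k H) ⊗[k] (H ⊗[k] H))

/-- The comultiplication of the quantum double `D(H) = H^{*cop} ∞ H`, using the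
coproduct of `H^{*cop}` on the first factor. -/
def doubleComul (B : BialgData k H) [FiniteDimensional k H] :
    Module.Dual k H ⊗[k] H →ₗ[k]
      (Module.Dual k H ⊗[k] H) ⊗[k] (Module.Dual k H ⊗[k] H) :=
  ((TensorProduct.tensorTensorTensorComm k (Module.Dual k H) (Module.Dual k H) H H) :
      (Module.Dual k H ⊗[k] Module.Dual k H) ⊗[k] (H ⊗[k] H) →ₗ[k]
        (Module.Dual k H ⊗[k] H) ⊗[k] (Module.Dual k H ⊗[k] H)) ∘ₗ
    (TensorProduct.map
      (((TensorProduct.comm k (Module.Dual k H) (Module.Dual k H)) :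
          Module.Dual k H ⊗[k] Module.Dual k H →ₗ[k]
            Module.Dual k H ⊗[k] Module.Dual k H) ∘ₗ B.dualComul)
      B.comul)

/-- The unit `ε ∞ 1` of the quantum double. -/
def doubleOne (B : BialgData k H) : Module.Dual k H ⊗[k] H :=
  B.counit ⊗ₜ B.one

/-- Componentwise multiplication on `D(H) ⊗ D(H)`. -/
def doubleMul2 (B : BialgData k H) (Tinv : H →ₗ[k] H) :
    ((Module.Dual k H ⊗[k] H) ⊗[k] (Module.Dual k H ⊗[k] H)) ⊗[k]
        ((Module.Dual k H ⊗[k] H) ⊗[k] (Module.Dual k H ⊗[k] H)) →ₗ[k]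
      (Module.Dual k H ⊗[k] H) ⊗[k] (Module.Dual k H ⊗[k] H) :=
  (TensorProduct.map (B.doubleMul Tinv) (B.doubleMul Tinv)) ∘ₗ
    ((TensorProduct.tensorTensorTensorComm k (Module.Dual k H ⊗[k] H)
        (Module.Dual k H ⊗[k] H) (Module.Dual k H ⊗[k] H) (Module.Dual k H ⊗[k] H)) :
      ((Module.Dual k H ⊗[k] H) ⊗[k] (Module.Dual k H ⊗[k] H)) ⊗[k]
          ((Module.Dual k H ⊗[k] H) ⊗[k] (Module.Dual k H ⊗[k] H)) →ₗ[k]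
        ((Module.Dual k H ⊗[k] H) ⊗[k] (Module.Dual k H ⊗[k] H)) ⊗[k]
          ((Module.Dual k H ⊗[k] H) ⊗[k] (Module.Dual k H ⊗[k] H)))

/-- Componentwise multiplication on `D(H) ⊗ D(H) ⊗ D(H)` (associated to the left). -/
def doubleMul3 (B : BialgData k H) (Tinv : H →ₗ[k] H) :
    (((Module.Dual k H ⊗[k] H) ⊗[k] (Module.Dual k H ⊗[k] H)) ⊗[k]
          (Module.Dual k H ⊗[k] H)) ⊗[k]
        (((Module.Dual k H ⊗[k] H) ⊗[k] (Module.Dual k H ⊗[k] H)) ⊗[k]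
          (Module.Dual k H ⊗[k] H)) →ₗ[k]
      ((Module.Dual k H ⊗[k] H) ⊗[k] (Module.Dual k H ⊗[k] H)) ⊗[k]
        (Module.Dual k H ⊗[k] H) :=
  (TensorProduct.map (B.doubleMul2 Tinv) (B.doubleMul Tinv)) ∘ₗ
    ((TensorProduct.tensorTensorTensorComm k
        ((Module.Dual k H ⊗[k] H) ⊗[k] (Module.Dual k H ⊗[k] H)) (Module.Dual k H ⊗[k] H)
        ((Module.Dual k H ⊗[k] H) ⊗[k] (Module.Dual k H ⊗[k] H)) (Module.Dual k H ⊗[k] H)) :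
      (((Module.Dual k H ⊗[k] H) ⊗[k] (Module.Dual k H ⊗[k] H)) ⊗[k]
            (Module.Dual k H ⊗[k] H)) ⊗[k]
          (((Module.Dual k H ⊗[k] H) ⊗[k] (Module.Dual k H ⊗[k] H)) ⊗[k]
            (Module.Dual k H ⊗[k] H)) →ₗ[k]
        (((Module.Dual k H ⊗[k] H) ⊗[k] (Module.Dual k H ⊗[k] H)) ⊗[k]
            ((Module.Dual k H ⊗[k] H) ⊗[k] (Module.Dual k H ⊗[k] H))) ⊗[k]
          ((Module.Dual k H ⊗[k] H) ⊗[k] (Module.Dual k H ⊗[k] H)))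

end BialgData

section Pairing

open BialgData

variable {k : Type} [Field k] {X A : Type}
  [AddCommGroup X] [Module k X] [AddCommGroup A] [Module k A]

/-- A weak Hopf pair `(X, A)`: a nondegenerate bilinear form `⟨·,·⟩ : X × A → k`
satisfying `⟨x, ab⟩ = Σ ⟨x', a⟩⟨x'', b⟩`, `⟨x, 1⟩ = ε(x)`,
`⟨xy, a⟩ = Σ ⟨x, a'⟩⟨y, a''⟩`, `⟨1, a⟩ = ε(a)` and `⟨S_X x, a⟩ = ⟨x, S_A a⟩`. -/
structure IsWeakHopfPair (BX : BialgData k X) (BA : BialgData k A)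
    (SX : X →ₗ[k] X) (SA : A →ₗ[k] A) (p : X →ₗ[k] A →ₗ[k] k) : Prop where
  nondegen_left : ∀ x : X, (∀ a : A, p x a = 0) → x = 0
  nondegen_right : ∀ a : A, (∀ x : X, p x a = 0) → a = 0
  pair_mul_right : ∀ (x : X) (a b : A),
    p x (BA.mul (a ⊗ₜ b)) =
      (TensorProduct.lid k k) ((TensorProduct.map (p.flip a) (p.flip b)) (BX.comul x))
  pair_one_right : ∀ x : X, p x BA.one = BX.counit x
  pair_mul_left : ∀ (x y : X) (a : A),
    p (BX.mul (x ⊗ₜ y)) a =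
      (TensorProduct.lid k k) ((TensorProduct.map (p x) (p y)) (BA.comul a))
  pair_one_left : ∀ a : A, p BX.one a = BA.counit a
  pair_antipode : ∀ (x : X) (a : A), p (SX x) a = p x (SA a)

/-- A weak Hopf skew-pair `(X, A)` (with `S_A` invertible, with inverse `SAinv`):
as a weak Hopf pair but with `⟨x, ab⟩ = Σ ⟨x'', a⟩⟨x', b⟩` and
`⟨S_X x, a⟩ = ⟨x, S_A⁻¹ a⟩`. -/
structure IsWeakHopfSkewPair (BX : BialgData k X) (BA : BialgData k A)
    (SX : X →ₗ[k] X) (SAinv : A →ₗ[k] A) (p : X →ₗ[k] A →ₗ[k] k) : Prop where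
  nondegen_left : ∀ x : X, (∀ a : A, p x a = 0) → x = 0
  nondegen_right : ∀ a : A, (∀ x : X, p x a = 0) → a = 0
  pair_mul_right : ∀ (x : X) (a b : A),
    p x (BA.mul (a ⊗ₜ b)) =
      (TensorProduct.lid k k) ((TensorProduct.map (p.flip b) (p.flip a)) (BX.comul x))
  pair_one_right : ∀ x : X, p x BA.one = BX.counit x
  pair_mul_left : ∀ (x y : X) (a : A),
    p (BX.mul (x ⊗ₜ y)) a =
      (TensorProduct.lid k k) ((TensorProduct.map (p x) (p y)) (BA.comul a))
  pair_one_left : ∀ a : A, p BX.one a = BA.counit a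
  pair_antipode : ∀ (x : X) (a : A), p (SX x) a = p x (SAinv a)

variable (BX : BialgData k X) (BA : BialgData k A)
  (SX : X →ₗ[k] X) (SAinv : A →ₗ[k] A) (p : X →ₗ[k] A →ₗ[k] k)

/-- Auxiliary map `x ↦ Σ ⟨x' · S_X(x'''), ·⟩ ⊗ x'' ∈ A* ⊗ X`. -/
def lactAux : X →ₗ[k] Module.Dual k A ⊗[k] X :=
  (TensorProduct.map (p ∘ₗ BX.mul ∘ₗ TensorProduct.map LinearMap.id SX) LinearMap.id) ∘ₗ
    (BialgData.swap23 k X X X) ∘ₗ BX.comul2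

/-- The left action `a ▷ x = Σ ⟨x' · S_X(x'''), a⟩ x''` of `A` on `X`,
as a linear map `A ⊗ X → X`. -/
def lact : A ⊗[k] X →ₗ[k] X :=
  ((TensorProduct.lid k X) : k ⊗[k] X →ₗ[k] X) ∘ₗ
    (TensorProduct.map (contractLeft k A) LinearMap.id) ∘ₗ
      (TensorProduct.map ((TensorProduct.comm k A (Module.Dual k A)) :
          A ⊗[k] Module.Dual k A →ₗ[k] Module.Dual k A ⊗[k] A) LinearMap.id) ∘ₗ
        ((TensorProduct.assoc k A (Module.Dual k A) X).symm :
          A ⊗[k] (Module.Dual k A ⊗[k] X) →ₗ[k] (A ⊗[k] Module.Dual k A) ⊗[k] X) ∘ₗ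
          (TensorProduct.map LinearMap.id (lactAux BX SX p))

/-- Auxiliary map `a ↦ Σ ⟨·, S_A⁻¹(a''') · a'⟩ ⊗ a'' ∈ X* ⊗ A`. -/
def ractAux : A →ₗ[k] Module.Dual k X ⊗[k] A :=
  (TensorProduct.map (p.flip ∘ₗ BA.mul ∘ₗ TensorProduct.map SAinv LinearMap.id)
      LinearMap.id) ∘ₗ
    (BialgData.rot3 k A A A) ∘ₗ BA.comul2

/-- The right action `a ◁ x = Σ ⟨x, S_A⁻¹(a''') a'⟩ a''` of `X` on `A`,
as a linear map `A ⊗ X → A`. -/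
def ract : A ⊗[k] X →ₗ[k] A :=
  ((TensorProduct.lid k A) : k ⊗[k] A →ₗ[k] A) ∘ₗ
    (TensorProduct.map (contractLeft k X) LinearMap.id) ∘ₗ
      (BialgData.swap23 k (Module.Dual k X) A X) ∘ₗ
        (TensorProduct.map (ractAux BA SAinv p) LinearMap.id)

end Pairing


namespace SkewAux

variable {k : Type} [Field k]
variable {V W M N P Q E F : Type}
  [AddCommGroup V] [Module k V] [AddCommGroup W] [Module k W]
  [AddCommGroup M] [Module k M] [AddCommGroup N] [Module k N]
  [AddCommGroup P] [Module k P] [AddCommGroup Q] [Module k Q]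
  [AddCommGroup E] [Module k E] [AddCommGroup F] [Module k F]

lemma comm_map (f : M →ₗ[k] P) (g : N →ₗ[k] Q) (t : M ⊗[k] N) :
    TensorProduct.comm k P Q (TensorProduct.map f g t)
      = TensorProduct.map g f (TensorProduct.comm k M N t) := by
  induction t using TensorProduct.induction_on with
  | zero => simp
  | tmul m n => simp
  | add a b ha hb => simp [ha, hb]

lemma comm_comm (t : M ⊗[k] N) :
    TensorProduct.comm k N M (TensorProduct.comm k M N t) = t := by
  induction t using TensorProduct.induction_on with
  | zero => simp
  | tmul m n => simp
  | add a b ha hb => simp [ha, hb]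

lemma map_map (f1 : M →ₗ[k] P) (g1 : N →ₗ[k] Q) (f2 : P →ₗ[k] E) (g2 : Q →ₗ[k] F)
    (t : M ⊗[k] N) :
    TensorProduct.map f2 g2 (TensorProduct.map f1 g1 t)
      = TensorProduct.map (f2 ∘ₗ f1) (g2 ∘ₗ g1) t := by
  induction t using TensorProduct.induction_on with
  | zero => simp
  | tmul m n => simp
  | add a b ha hb => simp [ha, hb]

lemma lid_comm (f : M →ₗ[k] k) (g : N →ₗ[k] k) (t : M ⊗[k] N) :
    TensorProduct.lid k k (TensorProduct.map f g t)
      = TensorProduct.lid k k (TensorProduct.map g f (TensorProduct.comm k M N t)) := by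
  induction t using TensorProduct.induction_on with
  | zero => simp
  | tmul m n => simp [mul_comm]
  | add a b ha hb => simp [ha, hb]

/-- The bilinear pairing on tensor products induced by two pairings. -/
def pairT (q1 : V →ₗ[k] E →ₗ[k] k) (q2 : W →ₗ[k] F →ₗ[k] k) :
    V ⊗[k] W →ₗ[k] E ⊗[k] F →ₗ[k] k :=
  (LinearMap.llcomp k (E ⊗[k] F) (k ⊗[k] k) k (TensorProduct.lid k k).toLinearMap) ∘ₗ
    (TensorProduct.homTensorHomMap (RingHom.id k) E F k k) ∘ₗ (TensorProduct.map q1 q2)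

lemma pairT_tmul_left (q1 : V →ₗ[k] E →ₗ[k] k) (q2 : W →ₗ[k] F →ₗ[k] k)
    (x : V) (y : W) (s : E ⊗[k] F) :
    pairT q1 q2 (x ⊗ₜ y) s
      = TensorProduct.lid k k (TensorProduct.map (q1 x) (q2 y) s) := by
  simp [pairT]

lemma pairT_tmul_right (q1 : V →ₗ[k] E →ₗ[k] k) (q2 : W →ₗ[k] F →ₗ[k] k)
    (t : V ⊗[k] W) (e : E) (f : F) :
    pairT q1 q2 t (e ⊗ₜ f)
      = TensorProduct.lid k k (TensorProduct.map (q1.flip e) (q2.flip f) t) := by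
  induction t using TensorProduct.induction_on with
  | zero => simp
  | tmul m n => simp [pairT]
  | add a b ha hb => simp [ha, hb]

lemma pairT_tmul_tmul (q1 : V →ₗ[k] E →ₗ[k] k) (q2 : W →ₗ[k] F →ₗ[k] k)
    (x : V) (y : W) (e : E) (f : F) :
    pairT q1 q2 (x ⊗ₜ y) (e ⊗ₜ f) = q1 x e * q2 y f := by
  simp [pairT_tmul_left]

/-- separation: if two separating families of functionals kill `t`, then `t = 0`. -/
lemma sep {G H : Type} (Φ : G → V →ₗ[k] k) (Ψ : H → W →ₗ[k] k)
    (h1 : ∀ v : V, (∀ e, Φ e v = 0) → v = 0)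
    (h2 : ∀ w : W, (∀ f, Ψ f w = 0) → w = 0)
    (t : V ⊗[k] W)
    (h : ∀ e f, TensorProduct.lid k k (TensorProduct.map (Φ e) (Ψ f) t) = 0) :
    t = 0 := by
  classical
  set C : H → (V ⊗[k] W →ₗ[k] V) := fun f =>
    (TensorProduct.rid k V).toLinearMap ∘ₗ LinearMap.lTensor V (Ψ f) with hC
  have claim1 : ∀ (f : H) (u : V ⊗[k] W) (e : G),
      Φ e (C f u) = TensorProduct.lid k k (TensorProduct.map (Φ e) (Ψ f) u) := by
    intro f u e
    induction u using TensorProduct.induction_on with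
    | zero => simp [hC]
    | tmul m n => simp [hC, mul_comm]
    | add a b ha hb => simp [hC, ha, hb] at *; simp [ha, hb]
  have hCt : ∀ f, C f t = 0 := fun f => h1 _ (fun e => (claim1 f t e).trans (h e f))
  let b := Module.Basis.ofVectorSpace k V
  set D : _ → (V ⊗[k] W →ₗ[k] W) := fun i =>
    (TensorProduct.lid k W).toLinearMap ∘ₗ LinearMap.rTensor W (b.coord i) with hD
  have claim2 : ∀ i (f : H) (u : V ⊗[k] W),
      Ψ f (D i u) = b.coord i (C f u) := by
    intro i f u
    induction u using TensorProduct.induction_on with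
    | zero => simp [hC, hD]
    | tmul m n => simp [hC, hD, mul_comm]
    | add a b ha hb => simp [hC, hD] at *; simp [ha, hb]
  have hDt : ∀ i, D i t = 0 := by
    intro i
    refine h2 _ (fun f => ?_)
    rw [claim2 i f t, hCt f, map_zero]
  let c := Module.Basis.ofVectorSpace k W
  have claim3 : ∀ (i j) (u : V ⊗[k] W),
      (Module.Basis.tensorProduct b c).repr u (i, j) = c.repr (D i u) j := by
    intro i j u
    induction u using TensorProduct.induction_on with
    | zero => simp
    | tmul m n => simp [hD, Module.Basis.coord_apply, mul_comm]
    | add a b ha hb => simp [ha, hb]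
  have : (Module.Basis.tensorProduct b c).repr t = 0 := by
    ext ij
    obtain ⟨i, j⟩ := ij
    rw [claim3 i j t, hDt i, map_zero]
    rfl
  simpa using ((Module.Basis.tensorProduct b c).repr.map_eq_zero_iff).1 this

end SkewAux

/-- if `A` and `X` are perfect weak Hopf algebras with weak antipodes
`S_A` (invertible) and `S_X`, and `(X, A)` is a weak Hopf skew-pair, then `A` and
`X` are both biperfect. -/
theorem skewPair_biperfect
    {k : Type} [Field k] {X A : Type}
    [AddCommGroup X] [Module k X] [AddCommGroup A] [Module k A]
    (BX : BialgData k X) (BA : BialgData k A)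
    (SX : X →ₗ[k] X) (SA SAinv : A →ₗ[k] A)
    (hX : BX.IsBialgebra) (hA : BA.IsBialgebra)
    (hSX : BX.IsWeakAntipode SX) (hSA : BA.IsWeakAntipode SA)
    (hinv₁ : SAinv ∘ₗ SA = LinearMap.id) (hinv₂ : SA ∘ₗ SAinv = LinearMap.id)
    (hpX : BX.Perfect SX) (hpA : BA.Perfect SA)
    (p : X →ₗ[k] A →ₗ[k] k)
    (hp : IsWeakHopfSkewPair BX BA SX SAinv p) :
    BA.Biperfect SA ∧ BX.Biperfect SX := by
  classical
  set PA : A →ₗ[k] A := BA.conv LinearMap.id SA with hPA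
  set PX : X →ₗ[k] X := BX.conv LinearMap.id SX with hPX
  set R : A →ₗ[k] A :=
    BA.mul ∘ₗ TensorProduct.map SAinv LinearMap.id ∘ₗ
      (TensorProduct.comm k A A).toLinearMap ∘ₗ BA.comul with hR
  -- pointwise inverses
  have hinv₁' : ∀ c : A, SAinv (SA c) = c := by
    intro c; have := LinearMap.congr_fun hinv₁ c; simpa using this
  have hinv₂' : ∀ c : A, SA (SAinv c) = c := by
    intro c; have := LinearMap.congr_fun hinv₂ c; simpa using this
  have hmulSA : ∀ u v : A, SA (BA.mul (u ⊗ₜ v)) = BA.mul (SA v ⊗ₜ SA u) := hpA.1.1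
  have hcomulSA : ∀ a : A, BA.comul (SA a)
      = (TensorProduct.comm k A A) ((TensorProduct.map SA SA) (BA.comul a)) :=
    hpA.1.2.2.1
  have hmulSAinv : ∀ u v : A, SAinv (BA.mul (u ⊗ₜ v)) = BA.mul (SAinv v ⊗ₜ SAinv u) := by
    intro u v
    calc SAinv (BA.mul (u ⊗ₜ v))
        = SAinv (BA.mul (SA (SAinv u) ⊗ₜ SA (SAinv v))) := by rw [hinv₂' u, hinv₂' v]
      _ = SAinv (SA (BA.mul (SAinv v ⊗ₜ SAinv u))) := by rw [hmulSA]
      _ = BA.mul (SAinv v ⊗ₜ SAinv u) := hinv₁' _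
  -- SAinv preserves centrality
  have hcent : ∀ c : A, (∀ y : A, BA.mul (c ⊗ₜ y) = BA.mul (y ⊗ₜ c)) →
      ∀ y : A, BA.mul (SAinv c ⊗ₜ y) = BA.mul (y ⊗ₜ SAinv c) := by
    intro c hc y
    calc BA.mul (SAinv c ⊗ₜ y)
        = BA.mul (SAinv c ⊗ₜ SAinv (SA y)) := by rw [hinv₁' y]
      _ = SAinv (BA.mul (SA y ⊗ₜ c)) := (hmulSAinv _ _).symm
      _ = SAinv (BA.mul (c ⊗ₜ SA y)) := by rw [hc (SA y)]
      _ = BA.mul (SAinv (SA y) ⊗ₜ SAinv c) := hmulSAinv _ _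
      _ = BA.mul (y ⊗ₜ SAinv c) := by rw [hinv₁' y]
  -- B3 : PA ∘ SA = SA ∘ SA ∘ R  (pointwise)
  have hB3aux : ∀ u : A ⊗[k] A,
      BA.mul ((TensorProduct.map LinearMap.id SA)
        ((TensorProduct.comm k A A) ((TensorProduct.map SA SA) u)))
      = SA (SA (BA.mul ((TensorProduct.map SAinv LinearMap.id)
          ((TensorProduct.comm k A A) u)))) := by
    intro u
    induction u using TensorProduct.induction_on with
    | zero => simp
    | tmul a b =>
        simp only [TensorProduct.map_tmul, TensorProduct.comm_tmul, LinearMap.id_coe,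
          id_eq]
        rw [hmulSA, hinv₂', hmulSA]
    | add a b ha hb => simp [ha, hb]
  have hB3 : ∀ a : A, PA (SA a) = SA (SA (R a)) := by
    intro a
    have h1 : PA (SA a)
        = BA.mul ((TensorProduct.map LinearMap.id SA) (BA.comul (SA a))) := rfl
    have h2 : R a = BA.mul ((TensorProduct.map SAinv LinearMap.id)
        ((TensorProduct.comm k A A) (BA.comul a))) := rfl
    rw [h1, hcomulSA a, h2]
    exact hB3aux (BA.comul a)
  -- centrality of R a
  have hcentR : ∀ (a y : A), BA.mul (R a ⊗ₜ y) = BA.mul (y ⊗ₜ R a) := by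
    intro a
    have h0 : ∀ y, BA.mul (SA (SA (R a)) ⊗ₜ y) = BA.mul (y ⊗ₜ SA (SA (R a))) := by
      intro y
      have := hpA.2 (SA a) y
      rwa [show BA.conv LinearMap.id SA = PA from rfl, hB3 a] at this
    have h1 := hcent _ h0
    rw [hinv₁'] at h1
    have h2 := hcent _ h1
    rwa [hinv₁'] at h2
  -- pairing lemmas
  have LmulLeft : ∀ (t : X ⊗[k] X) (b : A),
      p (BX.mul t) b = SkewAux.pairT p p t (BA.comul b) := by
    intro t b
    induction t using TensorProduct.induction_on with
    | zero => simp
    | tmul x y => rw [hp.pair_mul_left x y b, SkewAux.pairT_tmul_left]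
    | add a b' ha hb => simp [ha, hb]
  have LmulRight : ∀ (x : X) (s : A ⊗[k] A),
      p x (BA.mul s) = SkewAux.pairT p p (BX.comul x) ((TensorProduct.comm k A A) s) := by
    intro x s
    induction s using TensorProduct.induction_on with
    | zero => simp
    | tmul a b => rw [hp.pair_mul_right x a b, TensorProduct.comm_tmul,
        SkewAux.pairT_tmul_right]
    | add a b ha hb => simp [ha, hb]
  have Lantipode : ∀ (u : X ⊗[k] X) (s : A ⊗[k] A),
      SkewAux.pairT p p ((TensorProduct.map LinearMap.id SX) u) s
        = SkewAux.pairT p p u ((TensorProduct.map LinearMap.id SAinv) s) := by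
    intro u
    induction u using TensorProduct.induction_on with
    | zero => intro s; simp
    | tmul x y =>
        intro s
        induction s using TensorProduct.induction_on with
        | zero => simp
        | tmul a b =>
            simp only [TensorProduct.map_tmul, LinearMap.id_coe, id_eq,
              SkewAux.pairT_tmul_tmul]
            rw [hp.pair_antipode y b]
        | add a b ha hb =>
            simp only [map_add]
            rw [ha, hb]
    | add a b ha hb =>
        intro s
        simp only [map_add, LinearMap.add_apply]
        rw [ha s, hb s]
  -- K1 : p (PX x) b = p x (R b)
  have K1 : ∀ (x : X) (b : A), p (PX x) b = p x (R b) := by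
    intro x b
    have h1 : PX x = BX.mul ((TensorProduct.map LinearMap.id SX) (BX.comul x)) := rfl
    have h2 : R b = BA.mul ((TensorProduct.map SAinv LinearMap.id)
        ((TensorProduct.comm k A A) (BA.comul b))) := rfl
    rw [h1, LmulLeft, Lantipode, h2, LmulRight]
    congr 1
    rw [SkewAux.comm_map, SkewAux.comm_comm]
  have K1l : ∀ x : X, p x ∘ₗ R = p (PX x) :=
    fun x => LinearMap.ext fun a => (K1 x a).symm
  have K1f : ∀ a : A, p.flip a ∘ₗ PX = p.flip (R a) :=
    fun a => LinearMap.ext fun x => by simp [K1 x a]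
  -- star A : (R ⊗ id) ∘ comul = comm ∘ (id ⊗ R) ∘ comul
  have starA : ∀ a : A,
      (TensorProduct.map R LinearMap.id) (BA.comul a)
        = (TensorProduct.comm k A A)
            ((TensorProduct.map LinearMap.id R) (BA.comul a)) := by
    intro a
    rw [← sub_eq_zero]
    refine SkewAux.sep (fun x : X => p x) (fun y : X => p y)
      hp.nondegen_right hp.nondegen_right _ (fun x y => ?_)
    rw [map_sub, map_sub, sub_eq_zero]
    have hL : TensorProduct.lid k k ((TensorProduct.map (p x) (p y))
        ((TensorProduct.map R LinearMap.id) (BA.comul a)))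
        = p (BX.mul (PX x ⊗ₜ y)) a := by
      rw [SkewAux.map_map, K1l x, LinearMap.comp_id, ← hp.pair_mul_left]
    have hR' : TensorProduct.lid k k ((TensorProduct.map (p x) (p y))
        ((TensorProduct.comm k A A)
          ((TensorProduct.map LinearMap.id R) (BA.comul a))))
        = p (BX.mul (y ⊗ₜ PX x)) a := by
      rw [← SkewAux.lid_comm (p y) (p x), SkewAux.map_map, K1l x, LinearMap.comp_id,
        ← hp.pair_mul_left]
    rw [hL, hR', hpX.2 x y]
  -- coperfect A
  have lemA : ∀ w : A ⊗[k] A,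
      (TensorProduct.map PA LinearMap.id)
        ((TensorProduct.comm k A A) ((TensorProduct.map SA SA) w))
      = (TensorProduct.map (SA ∘ₗ SA) SA)
          ((TensorProduct.map R LinearMap.id) ((TensorProduct.comm k A A) w)) := by
    intro w
    induction w using TensorProduct.induction_on with
    | zero => simp
    | tmul a c =>
        simp only [TensorProduct.map_tmul, TensorProduct.comm_tmul, LinearMap.id_coe,
          id_eq, LinearMap.comp_apply]
        rw [hB3 c]
    | add a b ha hb => simp [ha, hb]
  have lemB : ∀ w : A ⊗[k] A,
      (TensorProduct.comm k A A)
        ((TensorProduct.map LinearMap.id PA)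
          ((TensorProduct.comm k A A) ((TensorProduct.map SA SA) w)))
      = (TensorProduct.map (SA ∘ₗ SA) SA)
          ((TensorProduct.map R LinearMap.id) w) := by
    intro w
    induction w using TensorProduct.induction_on with
    | zero => simp
    | tmul a c =>
        simp only [TensorProduct.map_tmul, TensorProduct.comm_tmul, LinearMap.id_coe,
          id_eq, LinearMap.comp_apply]
        rw [hB3 a]
    | add a b ha hb => simp [ha, hb]
  have coperfA : ∀ a : A,
      (TensorProduct.map PA LinearMap.id) (BA.comul a)
        = (TensorProduct.comm k A A)
            ((TensorProduct.map LinearMap.id PA) (BA.comul a)) := by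
    intro a
    rw [show a = SA (SAinv a) from (hinv₂' a).symm]
    rw [hcomulSA (SAinv a), lemA (BA.comul (SAinv a)), lemB (BA.comul (SAinv a))]
    have h2 : (TensorProduct.map R LinearMap.id) (BA.comul (SAinv a))
        = (TensorProduct.map R LinearMap.id)
            ((TensorProduct.comm k A A) (BA.comul (SAinv a))) :=
      (starA (SAinv a)).trans (SkewAux.comm_map LinearMap.id R (BA.comul (SAinv a)))
    rw [← h2]
  -- coperfect X
  have coperfX : ∀ x : X,
      (TensorProduct.map PX LinearMap.id) (BX.comul x)
        = (TensorProduct.comm k X X)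
            ((TensorProduct.map LinearMap.id PX) (BX.comul x)) := by
    intro x
    rw [← sub_eq_zero]
    refine SkewAux.sep (fun a : A => p.flip a) (fun b : A => p.flip b)
      hp.nondegen_left hp.nondegen_left _ (fun a b => ?_)
    rw [map_sub, map_sub, sub_eq_zero]
    have hL : TensorProduct.lid k k ((TensorProduct.map (p.flip a) (p.flip b))
        ((TensorProduct.map PX LinearMap.id) (BX.comul x)))
        = p x (BA.mul (b ⊗ₜ R a)) := by
      rw [SkewAux.map_map, K1f a, LinearMap.comp_id, ← hp.pair_mul_right]
    have hR' : TensorProduct.lid k k ((TensorProduct.map (p.flip a) (p.flip b))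
        ((TensorProduct.comm k X X)
          ((TensorProduct.map LinearMap.id PX) (BX.comul x))))
        = p x (BA.mul (R a ⊗ₜ b)) := by
      rw [← SkewAux.lid_comm (p.flip b) (p.flip a), SkewAux.map_map, K1f a,
        LinearMap.comp_id, ← hp.pair_mul_right]
    rw [hL, hR', hcentR a b]
  exact ⟨⟨hpA, hpA.1, coperfA⟩, ⟨hpX, hpX.1, coperfX⟩⟩
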